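/- Let V be a real vector space, let μ₂ : V × V → ℝ be a symmetric bilinear form with μ₂(f,f) ≥ 0 for all f ∈ V, and let σ : V × V → ℝ be an alternating bilinear form such that 4·μ₂(f,f)·μ₂(g,g) ≥ σ(f,g)² for all f, g ∈ V. Then for every n ∈ ℕ and every family f : Fin n → V, the complex n×n matrix N with entries N k l = μ₂(f k, f l) + (i/2)·σ(f k, f l) is positive semidefinite. -/

import Mathlib

open Complex ComplexOrder

/-- If `μ₂` is a positive symmetric bilinear form and `σ` an alternating bilinear form on
a real vector space satisfying `4 μ₂(f,f) μ₂(g,g) ≥ σ(f,g)²`, then the matrix with entries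
`μ₂(f k, f l) + (i/2) σ(f k, f l)` is positive semidefinite. -/
theorem gram_matrix_posSemidef
    (V : Type*) [AddCommGroup V] [Module ℝ V]
    (μ₂ : V →ₗ[ℝ] V →ₗ[ℝ] ℝ) (σ : V →ₗ[ℝ] V →ₗ[ℝ] ℝ)
    (hsymm : ∀ f g : V, μ₂ f g = μ₂ g f)
    (hpos : ∀ f : V, 0 ≤ μ₂ f f)
    (halt : ∀ f : V, σ f f = 0)
    (hdom : ∀ f g : V, σ f g ^ 2 ≤ 4 * (μ₂ f f * μ₂ g g))
    (n : ℕ) (f : Fin n → V) :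
    Matrix.PosSemidef (fun k l : Fin n =>
      ((μ₂ (f k) (f l) : ℂ) + Complex.I / 2 * (σ (f k) (f l) : ℂ))) := by
  have hanti : ∀ u v : V, σ u v = - σ v u := by
    intro u v
    have h := halt (u + v)
    simp [map_add, halt] at h
    linarith
  refine Matrix.posSemidef_iff_dotProduct_mulVec.mpr ?_
  constructor
  · ext k l
    show star (((μ₂ (f l) (f k) : ℂ) + Complex.I / 2 * (σ (f l) (f k) : ℂ))) = _
    simp only [Matrix.conjTranspose_apply, Matrix.of_apply, star, RCLike.star_def]
    rw [hsymm (f l) (f k), hanti (f l) (f k)]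
    push_cast
    apply Complex.ext <;> simp
  · intro x
    set a : Fin n → ℝ := fun k => (x k).re with ha
    set b : Fin n → ℝ := fun k => (x k).im with hb
    set g : V := ∑ k, a k • f k with hg
    set h : V := ∑ k, b k • f k with hh
    have hexp : ∀ (B : V →ₗ[ℝ] V →ₗ[ℝ] ℝ) (c d : Fin n → ℝ),
        B (∑ k, c k • f k) (∑ l, d l • f l)
          = ∑ k, ∑ l, c k * d l * B (f k) (f l) := by
      intro B c d
      simp only [map_sum, map_smul, LinearMap.sum_apply, LinearMap.smul_apply, smul_eq_mul,
        Finset.mul_sum]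
      rw [Finset.sum_comm]
      exact Finset.sum_congr rfl fun k _ => Finset.sum_congr rfl fun l _ => by ring
    have key : dotProduct (star x)
        (Matrix.mulVec (fun k l : Fin n =>
          ((μ₂ (f k) (f l) : ℂ) + Complex.I / 2 * (σ (f k) (f l) : ℂ))) x)
        = ((μ₂ g g + μ₂ h h - σ g h : ℝ) : ℂ) := by
      have hterm : ∀ k l : Fin n,
          (starRingEnd ℂ) (x k) * (((μ₂ (f k) (f l) : ℂ) + Complex.I / 2 * (σ (f k) (f l) : ℂ)) * x l)
            = (((a k * a l + b k * b l) * μ₂ (f k) (f l)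
                - (a k * b l - b k * a l) * σ (f k) (f l) / 2 : ℝ) : ℂ)
              + (((a k * a l + b k * b l) * σ (f k) (f l) / 2
                + (a k * b l - b k * a l) * μ₂ (f k) (f l) : ℝ) : ℂ) * Complex.I := by
        intro k l
        apply Complex.ext <;>
          simp [Complex.mul_re, Complex.mul_im, Complex.div_re, Complex.div_im,
            Complex.normSq_apply, a, b] <;> ring
      have hsum : dotProduct (star x)
          (Matrix.mulVec (fun k l : Fin n =>
            ((μ₂ (f k) (f l) : ℂ) + Complex.I / 2 * (σ (f k) (f l) : ℂ))) x)
          = ∑ k, ∑ l, ((starRingEnd ℂ) (x k) * (((μ₂ (f k) (f l) : ℂ) + Complex.I / 2 * (σ (f k) (f l) : ℂ)) * x l)) := by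
        simp [dotProduct, Matrix.mulVec, Finset.mul_sum]
      rw [hsum]
      have hre : (∑ k, ∑ l, ((a k * a l + b k * b l) * μ₂ (f k) (f l)
                - (a k * b l - b k * a l) * σ (f k) (f l) / 2))
          = μ₂ g g + μ₂ h h - σ g h := by
        have e : ∀ k l : Fin n, ((a k * a l + b k * b l) * μ₂ (f k) (f l)
                - (a k * b l - b k * a l) * σ (f k) (f l) / 2)
            = a k * a l * μ₂ (f k) (f l) + b k * b l * μ₂ (f k) (f l)
              - (a k * b l * σ (f k) (f l)) / 2 + (b k * a l * σ (f k) (f l)) / 2 := by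
          intro k l; ring
        simp only [e, Finset.sum_add_distrib, Finset.sum_sub_distrib, ← Finset.sum_div]
        rw [← hexp μ₂ a a, ← hexp μ₂ b b, ← hexp σ a b, ← hexp σ b a, ← hg, ← hh]
        rw [hanti h g]
        ring
      have him : (∑ k, ∑ l, ((a k * a l + b k * b l) * σ (f k) (f l) / 2
                + (a k * b l - b k * a l) * μ₂ (f k) (f l))) = 0 := by
        have e : ∀ k l : Fin n, ((a k * a l + b k * b l) * σ (f k) (f l) / 2
                + (a k * b l - b k * a l) * μ₂ (f k) (f l))
            = (a k * a l * σ (f k) (f l)) / 2 + (b k * b l * σ (f k) (f l)) / 2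
              + a k * b l * μ₂ (f k) (f l) - b k * a l * μ₂ (f k) (f l) := by
          intro k l; ring
        simp only [e, Finset.sum_add_distrib, Finset.sum_sub_distrib, ← Finset.sum_div]
        rw [← hexp σ a a, ← hexp σ b b, ← hexp μ₂ a b, ← hexp μ₂ b a, ← hg, ← hh]
        rw [halt g, halt h, hsymm g h]
        ring
      calc ∑ k, ∑ l, ((starRingEnd ℂ) (x k) * (((μ₂ (f k) (f l) : ℂ) + Complex.I / 2 * (σ (f k) (f l) : ℂ)) * x l))
          = ((∑ k, ∑ l, ((a k * a l + b k * b l) * μ₂ (f k) (f l)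
                - (a k * b l - b k * a l) * σ (f k) (f l) / 2) : ℝ) : ℂ)
            + ((∑ k, ∑ l, ((a k * a l + b k * b l) * σ (f k) (f l) / 2
                + (a k * b l - b k * a l) * μ₂ (f k) (f l)) : ℝ) : ℂ) * Complex.I := by
            simp only [hterm]
            push_cast
            rw [Finset.sum_mul, ← Finset.sum_add_distrib]
            refine Finset.sum_congr rfl fun k _ => ?_
            rw [Finset.sum_mul, ← Finset.sum_add_distrib]
        _ = ((μ₂ g g + μ₂ h h - σ g h : ℝ) : ℂ) := by rw [hre, him]; simp
    rw [key]
    have hineq : 0 ≤ μ₂ g g + μ₂ h h - σ g h := by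
      nlinarith [hpos g, hpos h, hdom g h, sq_nonneg (μ₂ g g - μ₂ h h)]
    exact_mod_cast hineq
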